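/- Let G and H be finite connected weighted graphs with the same terminal set T, and suppose their families of elementary terminal subsets coincide: T_e(G) = T_e(H), where T_e(G) = {S ⊂ T : G∖E_S has exactly two components}. If for every S ∈ T_e(G) we have mincut_G(S) ≤ mincut_H(S) ≤ q·mincut_G(S) for some q ≥ 1, then for every nonempty proper S ⊂ T, mincut_G(S) ≤ mincut_H(S) ≤ q·mincut_G(S). -/

import Mathlib

def Separates {V : Type} (G : SimpleGraph V) (F : Set (Sym2 V)) (A B : Set V) : Prop :=
  ∀ a ∈ A, ∀ b ∈ B, ¬ (G.deleteEdges F).Reachable a b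

noncomputable def cutWeight {V : Type} (c : Sym2 V → ℝ) (F : Finset (Sym2 V)) : ℝ :=
  ∑ e ∈ F, c e

def IsMinCutset {V : Type} (G : SimpleGraph V) (c : Sym2 V → ℝ) (T S : Set V)
    (F : Finset (Sym2 V)) : Prop :=
  (F : Set (Sym2 V)) ⊆ G.edgeSet ∧ Separates G (F : Set (Sym2 V)) S (T \ S) ∧
  ∀ F' : Finset (Sym2 V), (F' : Set (Sym2 V)) ⊆ G.edgeSet →
    Separates G (F' : Set (Sym2 V)) S (T \ S) → cutWeight c F ≤ cutWeight c F'

noncomputable def numComponents {V : Type} (G : SimpleGraph V) : ℕ :=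
  Nat.card G.ConnectedComponent

open Set SimpleGraph

variable {W τ : Type} {H : SimpleGraph W}

lemma walk_inv {U : Set W} (h : ∀ u v, H.Adj u v → (u ∈ U ↔ v ∈ U)) {a b : W}
    (hr : H.Reachable a b) : a ∈ U ↔ b ∈ U := by
  obtain ⟨p⟩ := hr
  induction p with
  | nil => exact Iff.rfl
  | cons h' _ ih => exact (h _ _ h').trans ih

lemma reach_insert {F : Set (Sym2 W)} {p q a b : W}
    (h : (H.deleteEdges (F \ {s(p,q)})).Reachable a b) :
    (H.deleteEdges F).Reachable a b ∨
    ((H.deleteEdges F).Reachable a p ∧ (H.deleteEdges F).Reachable q b) ∨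
    ((H.deleteEdges F).Reachable a q ∧ (H.deleteEdges F).Reachable p b) := by
  obtain ⟨w⟩ := h
  induction w with
  | nil => exact Or.inl (Reachable.refl _)
  | @cons u v _ h' _ ih =>
    rw [SimpleGraph.deleteEdges_adj] at h'
    obtain ⟨hadj, hne⟩ := h'
    by_cases hmem : s(u,v) ∈ F
    · have heq : s(u,v) = s(p,q) := by
        by_contra hne2
        exact hne ⟨hmem, hne2⟩
      rw [Sym2.eq_iff] at heq
      rcases heq with ⟨hup, hvq⟩ | ⟨huq, hvp⟩
      · subst hup; subst hvq
        rcases ih with h1 | ⟨h1, h2⟩ | ⟨h1, h2⟩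
        · exact Or.inr (Or.inl ⟨Reachable.refl _, h1⟩)
        · exact Or.inr (Or.inl ⟨Reachable.refl _, h2⟩)
        · exact Or.inl h2
      · subst huq; subst hvp
        rcases ih with h1 | ⟨h1, h2⟩ | ⟨h1, h2⟩
        · exact Or.inr (Or.inr ⟨Reachable.refl _, h1⟩)
        · exact Or.inl h2
        · exact Or.inr (Or.inr ⟨Reachable.refl _, h2⟩)
    · have hadj' : (H.deleteEdges F).Adj u v := by
        rw [SimpleGraph.deleteEdges_adj]; exact ⟨hadj, hmem⟩
      rcases ih with h1 | ⟨h1, h2⟩ | ⟨h1, h2⟩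
      · exact Or.inl (hadj'.reachable.trans h1)
      · exact Or.inr (Or.inl ⟨hadj'.reachable.trans h1, h2⟩)
      · exact Or.inr (Or.inr ⟨hadj'.reachable.trans h1, h2⟩)

lemma frontier_edge {F : Set (Sym2 W)} {a b : W} (h : H.Reachable a b)
    (h' : ¬ (H.deleteEdges F).Reachable a b) :
    ∃ p q : W, s(p,q) ∈ F ∧ (H.deleteEdges F).Reachable a p := by
  obtain ⟨w⟩ := h
  revert h'
  induction w with
  | nil => exact fun h' => absurd (Reachable.refl _) h'
  | @cons u v b' hadj _ ih =>
    intro h'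
    by_cases hm : s(u,v) ∈ F
    · exact ⟨u, v, hm, Reachable.refl _⟩
    · have hadj' : (H.deleteEdges F).Adj u v := by
        rw [SimpleGraph.deleteEdges_adj]; exact ⟨hadj, hm⟩
      have h'' : ¬ (H.deleteEdges F).Reachable v b' := fun hr => h' (hadj'.reachable.trans hr)
      obtain ⟨p, q, hm2, hr2⟩ := ih h''
      exact ⟨p, q, hm2, hadj'.reachable.trans hr2⟩

lemma sep_mono {F F' : Set (Sym2 W)} {A B : Set W} (hsub : F ⊆ F')
    (h : Separates H F A B) : Separates H F' A B :=
  fun a ha b hb hr => h a ha b hb (hr.mono (SimpleGraph.deleteEdges_anti hsub))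

lemma sep_symm {F : Set (Sym2 W)} {A B : Set W} (h : Separates H F A B) :
    Separates H F B A := fun b hb a ha hr => h a ha b hb hr.symm

lemma mem_image_iff (t : τ ↪ W) {S : Set τ} {y : τ} : t y ∈ t '' S ↔ y ∈ S := by
  constructor
  · rintro ⟨y', hy', heq⟩
    rwa [← t.injective heq]
  · exact fun h => ⟨y, h, rfl⟩

lemma mem_diff_range (t : τ ↪ W) {S : Set τ} {y : τ} (hy : y ∉ S) :
    t y ∈ Set.range t \ t '' S := ⟨⟨y, rfl⟩, fun h => hy ((mem_image_iff t).mp h)⟩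

lemma sep_compl (t : τ ↪ W) {F : Set (Sym2 W)} {S : Set τ}
    (h : Separates H F (t '' S) (Set.range t \ t '' S)) :
    Separates H F (t '' Sᶜ) (Set.range t \ t '' Sᶜ) := by
  rw [Set.range_diff_image t.injective, compl_compl]
  rw [Set.range_diff_image t.injective] at h
  exact sep_symm h

lemma minCutset_compl {c : Sym2 W → ℝ} (t : τ ↪ W) {S : Set τ} {F : Finset (Sym2 W)}
    (h : IsMinCutset H c (Set.range t) (t '' S) F) :
    IsMinCutset H c (Set.range t) (t '' Sᶜ) F := by
  obtain ⟨h1, h2, h3⟩ := h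
  refine ⟨h1, sep_compl t h2, fun F' hF1 hF2 => h3 F' hF1 ?_⟩
  have := sep_compl t hF2
  rwa [compl_compl] at this

lemma cutWeight_nonneg {c : Sym2 W → ℝ} {F : Finset (Sym2 W)}
    (h : ∀ e ∈ F, 0 ≤ c e) : 0 ≤ cutWeight c F := Finset.sum_nonneg h

lemma cutWeight_union_le [DecidableEq (Sym2 W)] {c : Sym2 W → ℝ} {F F' : Finset (Sym2 W)}
    (h : ∀ e ∈ F, 0 ≤ c e) : cutWeight c (F ∪ F') ≤ cutWeight c F + cutWeight c F' := by
  have := Finset.sum_union_inter (s₁ := F) (s₂ := F') (f := c)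
  have h2 : 0 ≤ ∑ e ∈ F ∩ F', c e :=
    Finset.sum_nonneg fun e he => h e (Finset.mem_inter.mp he).1
  unfold cutWeight
  linarith

lemma minCut_pos {c : Sym2 W → ℝ} (hconn : H.Connected)
    (hpos : ∀ e ∈ H.edgeSet, 0 < c e) (t : τ ↪ W) {S : Set τ}
    (hS : S.Nonempty) (hS' : S ≠ Set.univ) {F : Finset (Sym2 W)}
    (hF : IsMinCutset H c (Set.range t) (t '' S) F) : 0 < cutWeight c F := by
  obtain ⟨x, hx⟩ := hS
  obtain ⟨y, hy⟩ := Set.ne_univ_iff_exists_notMem S |>.mp hS'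
  have hFne : F.Nonempty := by
    rcases F.eq_empty_or_nonempty with h | h
    · exfalso
      refine hF.2.1 (t x) ⟨x, hx, rfl⟩ (t y) (mem_diff_range t hy) ?_
      have : ((F : Set (Sym2 W))) = ∅ := by rw [h]; simp
      rw [this, SimpleGraph.deleteEdges_empty]
      exact hconn.preconnected _ _
    · exact h
  exact Finset.sum_pos (fun e he => hpos e (hF.1 he)) hFne

lemma union_sep [DecidableEq (Sym2 W)] {c : Sym2 W → ℝ} (t : τ ↪ W) {A B S : Set τ}
    (hAB : A ∪ B = S ∨ A ∪ B = Sᶜ) {FA FB : Finset (Sym2 W)}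
    (hA : Separates H (FA : Set (Sym2 W)) (t '' A) (Set.range t \ t '' A))
    (hB : Separates H (FB : Set (Sym2 W)) (t '' B) (Set.range t \ t '' B)) :
    Separates H ((FA ∪ FB : Finset (Sym2 W)) : Set (Sym2 W)) (t '' S)
      (Set.range t \ t '' S) := by
  rintro a ⟨z, hz, rfl⟩ b hb hr
  obtain ⟨⟨y, rfl⟩, hyS⟩ := hb
  have hyS' : y ∉ S := fun h => hyS ((mem_image_iff t).mpr h)
  have hcoe : ((FA ∪ FB : Finset (Sym2 W)) : Set (Sym2 W)) = (FA : Set (Sym2 W)) ∪ FB := by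
    simp
  have hrA : (H.deleteEdges (FA : Set (Sym2 W))).Reachable (t z) (t y) := by
    refine hr.mono (SimpleGraph.deleteEdges_anti ?_)
    rw [hcoe]; exact Set.subset_union_left
  have hrB : (H.deleteEdges (FB : Set (Sym2 W))).Reachable (t z) (t y) := by
    refine hr.mono (SimpleGraph.deleteEdges_anti ?_)
    rw [hcoe]; exact Set.subset_union_right
  rcases hAB with hU | hU
  · -- z ∈ A ∪ B, y ∉ A ∪ B
    have hzU : z ∈ A ∪ B := hU ▸ hz
    have hyU : y ∉ A ∪ B := hU ▸ hyS'
    rcases hzU with hzA | hzB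
    · exact hA (t z) ⟨z, hzA, rfl⟩ (t y) (mem_diff_range t fun h => hyU (Or.inl h)) hrA
    · exact hB (t z) ⟨z, hzB, rfl⟩ (t y) (mem_diff_range t fun h => hyU (Or.inr h)) hrB
  · have hyU : y ∈ A ∪ B := hU ▸ hyS'
    have hzU : z ∉ A ∪ B := hU ▸ fun (h : z ∈ Sᶜ) => h hz
    rcases hyU with hyA | hyB
    · exact hA (t y) ⟨y, hyA, rfl⟩ (t z) (mem_diff_range t fun h => hzU (Or.inl h)) hrA.symm
    · exact hB (t y) ⟨y, hyB, rfl⟩ (t z) (mem_diff_range t fun h => hzU (Or.inr h)) hrB.symm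

/-- Every edge of a minimum cutset joins (a vertex reachable from) the `S` side to the
`Sᶜ` side in the graph with the cutset removed. -/
lemma cross_edge {c : Sym2 W → ℝ} (hpos : ∀ e ∈ H.edgeSet, 0 < c e) (t : τ ↪ W)
    {S : Set τ} {F : Finset (Sym2 W)}
    (hF : IsMinCutset H c (Set.range t) (t '' S) F) {u v : W} (he : s(u,v) ∈ F) :
    (∃ x ∈ S, (H.deleteEdges (F : Set (Sym2 W))).Reachable (t x) u) ∧
      (∃ y ∉ S, (H.deleteEdges (F : Set (Sym2 W))).Reachable (t y) v) ∨
    (∃ y ∉ S, (H.deleteEdges (F : Set (Sym2 W))).Reachable (t y) u) ∧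
      (∃ x ∈ S, (H.deleteEdges (F : Set (Sym2 W))).Reachable (t x) v) := by
  classical
  set F' := F.erase s(u,v) with hF'def
  have hsum : cutWeight c F' + c s(u,v) = cutWeight c F := Finset.sum_erase_add F c he
  have hclt : cutWeight c F' < cutWeight c F := by
    have := hpos _ (hF.1 he); linarith
  have hnotsep : ¬ Separates H (F' : Set (Sym2 W)) (t '' S) (Set.range t \ t '' S) := by
    intro hsep
    have := hF.2.2 F' (fun e heF' => hF.1 (Finset.erase_subset _ _ heF')) hsep
    linarith
  unfold Separates at hnotsep
  push_neg at hnotsep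
  obtain ⟨a, ha, b, hb, hr⟩ := hnotsep
  obtain ⟨x, hx, rfl⟩ := ha
  obtain ⟨⟨y, rfl⟩, hyS⟩ := hb
  have hy : y ∉ S := fun h => hyS ((mem_image_iff t).mpr h)
  have hcoe : ((F' : Finset (Sym2 W)) : Set (Sym2 W)) = (F : Set (Sym2 W)) \ {s(u,v)} := by
    rw [hF'def, Finset.coe_erase]
  rw [hcoe] at hr
  rcases reach_insert hr with h1 | ⟨h1, h2⟩ | ⟨h1, h2⟩
  · exact absurd h1 (hF.2.1 (t x) ⟨x, hx, rfl⟩ (t y) (mem_diff_range t hy))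
  · exact Or.inl ⟨⟨x, hx, h1⟩, ⟨y, hy, h2.symm⟩⟩
  · exact Or.inr ⟨⟨y, hy, h2.symm⟩, ⟨x, hx, h1⟩⟩

lemma exists_strict_component [Finite W] {c : Sym2 W → ℝ} (hconn : H.Connected)
    (hpos : ∀ e ∈ H.edgeSet, 0 < c e) (t : τ ↪ W) {S : Set τ}
    (hS : S.Nonempty) (hS' : S ≠ Set.univ) {F : Finset (Sym2 W)}
    (hF : IsMinCutset H c (Set.range t) (t '' S) F)
    (hk : numComponents (H.deleteEdges (F : Set (Sym2 W))) ≠ 2) :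
    ∃ x₀ : τ,
      (x₀ ∈ S ∧ {y : τ | (H.deleteEdges (F : Set (Sym2 W))).Reachable (t x₀) (t y)} ≠ S) ∨
      (x₀ ∉ S ∧ {y : τ | (H.deleteEdges (F : Set (Sym2 W))).Reachable (t x₀) (t y)} ≠ Sᶜ) := by
  classical
  set H' := H.deleteEdges (F : Set (Sym2 W)) with hH'
  by_contra hcon
  push_neg at hcon
  obtain ⟨x₁, hx₁⟩ := hS
  obtain ⟨y₁, hy₁⟩ := Set.ne_univ_iff_exists_notMem S |>.mp hS'
  have notReach : ∀ x ∈ S, ∀ y ∉ S, ¬ H'.Reachable (t x) (t y) := fun x hx y hy =>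
    hF.2.1 (t x) ⟨x, hx, rfl⟩ (t y) (mem_diff_range t hy)
  have hAx₁ : {y : τ | H'.Reachable (t x₁) (t y)} = S := (hcon x₁).1 hx₁
  have hAy₁ : {y : τ | H'.Reachable (t y₁) (t y)} = Sᶜ := (hcon y₁).2 hy₁
  have allS : ∀ x ∈ S, H'.Reachable (t x₁) (t x) := fun x hx => by
    have : x ∈ {y : τ | H'.Reachable (t x₁) (t y)} := hAx₁ ▸ hx
    exact this
  have allC : ∀ y ∉ S, H'.Reachable (t y₁) (t y) := fun y hy => by
    have : y ∈ {y' : τ | H'.Reachable (t y₁) (t y')} := hAy₁ ▸ hy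
    exact this
  -- there must be a third component
  have hfin : Finite H'.ConnectedComponent :=
    Finite.of_surjective _ Quot.mk_surjective
  haveI : Fintype H'.ConnectedComponent := Fintype.ofFinite _
  have hge2 : 1 < Nat.card H'.ConnectedComponent := by
    rw [Nat.card_eq_fintype_card, Fintype.one_lt_card_iff_nontrivial]
    refine ⟨H'.connectedComponentMk (t x₁), H'.connectedComponentMk (t y₁), ?_⟩
    intro h
    exact notReach x₁ hx₁ y₁ hy₁ (SimpleGraph.ConnectedComponent.exact h)
  have hw₀ : ∃ w₀ : W, ¬ H'.Reachable (t x₁) w₀ ∧ ¬ H'.Reachable (t y₁) w₀ := by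
    by_contra hall
    push_neg at hall
    have hsurj : Function.Surjective
        (fun b : Bool => if b then H'.connectedComponentMk (t x₁)
          else H'.connectedComponentMk (t y₁)) := by
      intro γ
      induction γ using SimpleGraph.ConnectedComponent.ind with
      | _ w =>
        rcases Classical.em (H'.Reachable (t x₁) w) with h | h
        · exact ⟨true, by simpa using SimpleGraph.ConnectedComponent.sound h⟩
        · obtain h2 := hall w h
          exact ⟨false, by simpa using SimpleGraph.ConnectedComponent.sound h2⟩
    have hle2 : Nat.card H'.ConnectedComponent ≤ 2 := by
      have := Nat.card_le_card_of_surjective _ hsurj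
      simpa using this
    have : numComponents H' = 2 := le_antisymm hle2 hge2
    exact hk (hH' ▸ this)
  obtain ⟨w₀, hwx, hwy⟩ := hw₀
  -- w₀'s component is "free"; find a frontier edge and contradict cross_edge
  have hHr : H.Reachable w₀ (t x₁) := hconn.preconnected _ _
  have hnotr : ¬ H'.Reachable w₀ (t x₁) := fun h => hwx h.symm
  obtain ⟨p, q, hpq, hrp⟩ := frontier_edge hHr hnotr
  have hmem : s(p, q) ∈ F := hpq
  rcases cross_edge hpos t hF hmem with ⟨⟨x, hx, hxp⟩, _⟩ | ⟨⟨y, hy, hyp⟩, _⟩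
  · exact hwx ((allS x hx).trans (hxp.trans hrp.symm))
  · exact hwy ((allC y hy).trans (hyp.trans hrp.symm))

lemma split_aux {c : Sym2 W → ℝ} (hpos : ∀ e ∈ H.edgeSet, 0 < c e) (t : τ ↪ W)
    {S : Set τ} (hS' : S ≠ Set.univ) {F : Finset (Sym2 W)}
    (hF : IsMinCutset H c (Set.range t) (t '' S) F) (x₀ : τ) (hx₀ : x₀ ∈ S)
    (hAne : {y : τ | (H.deleteEdges (F : Set (Sym2 W))).Reachable (t x₀) (t y)} ≠ S) :
    ∃ A B : Set τ, A.Nonempty ∧ A ≠ Set.univ ∧ B.Nonempty ∧ B ≠ Set.univ ∧ A ∪ B = S ∧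
      ∀ FA FB : Finset (Sym2 W),
        IsMinCutset H c (Set.range t) (t '' A) FA →
        IsMinCutset H c (Set.range t) (t '' B) FB →
        cutWeight c FA + cutWeight c FB = cutWeight c F := by
  classical
  set H' := H.deleteEdges (F : Set (Sym2 W)) with hH'
  set A := {y : τ | H'.Reachable (t x₀) (t y)} with hAdef
  set C := {w : W | H'.Reachable (t x₀) w} with hCdef
  have notReach : ∀ x ∈ S, ∀ y ∉ S, ¬ H'.Reachable (t x) (t y) := fun x hx y hy =>
    hF.2.1 (t x) ⟨x, hx, rfl⟩ (t y) (mem_diff_range t hy)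
  have hmemA : ∀ y : τ, y ∈ A ↔ H'.Reachable (t x₀) (t y) := fun y => Iff.rfl
  have hmemC : ∀ w : W, w ∈ C ↔ H'.Reachable (t x₀) w := fun w => Iff.rfl
  have hAS : A ⊆ S := fun y hy => by
    by_contra hyS
    exact notReach x₀ hx₀ y hyS ((hmemA y).mp hy)
  have hAnonempty : A.Nonempty := ⟨x₀, (hmemA x₀).mpr (SimpleGraph.Reachable.refl _)⟩
  have hAuniv : A ≠ Set.univ := fun h => hS' (Set.eq_univ_of_univ_subset (h ▸ hAS))
  set B := S \ A with hBdef
  have hBnonempty : B.Nonempty := by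
    obtain ⟨y, hyS, hyA⟩ := Set.exists_of_ssubset (hAS.ssubset_of_ne hAne)
    exact ⟨y, hyS, hyA⟩
  have hBuniv : B ≠ Set.univ := fun h => by
    have : x₀ ∈ B := h ▸ Set.mem_univ x₀
    exact this.2 ((hmemA x₀).mpr (SimpleGraph.Reachable.refl _))
  have hABu : A ∪ B = S := by
    rw [hBdef, Set.union_diff_cancel hAS]
  set δC := F.filter (fun e => ∃ v ∈ e, v ∈ C) with hδC
  set E' := F.filter (fun e => ¬ ∃ v ∈ e, v ∈ C) with hE'
  have hsum : cutWeight c δC + cutWeight c E' = cutWeight c F :=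
    Finset.sum_filter_add_sum_filter_not F _ c
  have boundary : ∀ u v : W, H.Adj u v → u ∈ C → v ∉ C → s(u,v) ∈ F := by
    intro u v hadj hu hv
    by_contra hm
    have hadj' : H'.Adj u v := by rw [hH', SimpleGraph.deleteEdges_adj]; exact ⟨hadj, hm⟩
    exact hv (((hmemC u).mp hu).trans hadj'.reachable)
  have memδC : ∀ u v : W, s(u,v) ∈ F → u ∈ C → s(u,v) ∈ δC := fun u v hm hu =>
    Finset.mem_filter.mpr ⟨hm, ⟨u, Sym2.mem_mk_left u v, hu⟩⟩
  -- δC separates A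
  have sepA : Separates H (δC : Set (Sym2 W)) (t '' A) (Set.range t \ t '' A) := by
    rintro a ⟨x, hx, rfl⟩ b ⟨⟨y, rfl⟩, hyA⟩ hr
    have hy : y ∉ A := fun h => hyA ⟨y, h, rfl⟩
    have hinv : ∀ u v : W, (H.deleteEdges (δC : Set (Sym2 W))).Adj u v → (u ∈ C ↔ v ∈ C) := by
      intro u v hadj
      rw [SimpleGraph.deleteEdges_adj] at hadj
      obtain ⟨hadj, hnm⟩ := hadj
      constructor
      · intro hu
        by_contra hv
        exact hnm (Finset.mem_coe.mpr (memδC u v (boundary u v hadj hu hv) hu))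
      · intro hv
        by_contra hu
        have h2 : s(v,u) ∈ δC := memδC v u (boundary v u hadj.symm hv hu) hv
        rw [Sym2.eq_swap] at h2
        exact hnm (Finset.mem_coe.mpr h2)
    have hiff := walk_inv hinv hr
    exact hy ((hmemA y).mpr ((hmemC (t y)).mp (hiff.mp ((hmemC (t x)).mpr ((hmemA x).mp hx)))))
  -- E' separates B
  have sepB : Separates H (E' : Set (Sym2 W)) (t '' B) (Set.range t \ t '' B) := by
    rintro a ⟨x, hx, rfl⟩ b ⟨⟨y, rfl⟩, hyB⟩ hr
    have hy : y ∉ B := fun h => hyB ⟨y, h, rfl⟩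
    set U := {w : W | w ∉ C ∧ ∃ x' ∈ S, H'.Reachable (t x') w} with hU
    have key : ∀ u v : W, s(u,v) ∈ F → u ∈ C → u ∉ U ∧ v ∉ U := by
      intro u v hm hu
      refine ⟨fun hUu => hUu.1 hu, ?_⟩
      intro hvU
      rcases cross_edge hpos t hF hm with ⟨_, hCv⟩ | ⟨hCu, _⟩
      · obtain ⟨y', hy', h2⟩ := hCv
        obtain ⟨x', hx', h1⟩ := hvU.2
        exact notReach x' hx' y' hy' (h1.trans h2.symm)
      · obtain ⟨y', hy', h2⟩ := hCu
        exact notReach x₀ hx₀ y' hy' (((hmemC u).mp hu).trans h2.symm)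
    have hinv : ∀ u v : W, (H.deleteEdges (E' : Set (Sym2 W))).Adj u v → (u ∈ U ↔ v ∈ U) := by
      intro u v hadj
      rw [SimpleGraph.deleteEdges_adj] at hadj
      obtain ⟨hadj, hnm⟩ := hadj
      by_cases hm : s(u,v) ∈ F
      · have hp : ∃ z ∈ s(u,v), z ∈ C := by
          by_contra hnp
          exact hnm (Finset.mem_coe.mpr (Finset.mem_filter.mpr ⟨hm, hnp⟩))
        obtain ⟨z, hz, hzC⟩ := hp
        rcases Sym2.mem_iff.mp hz with rfl | rfl
        · have hk := key z v hm hzC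
          simp only [hk.1, hk.2]
        · have hm' : s(z,u) ∈ F := by rwa [Sym2.eq_swap]
          have hk := key z u hm' hzC
          simp only [hk.1, hk.2]
      · have hadj' : H'.Adj u v := by rw [hH', SimpleGraph.deleteEdges_adj]; exact ⟨hadj, hm⟩
        constructor
        · rintro ⟨h1, x', hx', h2⟩
          refine ⟨fun hvC => h1 ?_, ⟨x', hx', h2.trans hadj'.reachable⟩⟩
          exact (hmemC u).mpr (((hmemC v).mp hvC).trans hadj'.symm.reachable)
        · rintro ⟨h1, x', hx', h2⟩
          refine ⟨fun huC => h1 ?_, ⟨x', hx', h2.trans hadj'.symm.reachable⟩⟩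
          exact (hmemC v).mpr (((hmemC u).mp huC).trans hadj'.reachable)
    have hxU : t x ∈ U := by
      refine ⟨fun hC => hx.2 ((hmemA x).mpr ((hmemC (t x)).mp hC)), ⟨x, hx.1, SimpleGraph.Reachable.refl _⟩⟩
    have hyU : t y ∉ U := by
      intro hU2
      by_cases hyA2 : y ∈ A
      · exact hU2.1 ((hmemC (t y)).mpr ((hmemA y).mp hyA2))
      · have hyS : y ∉ S := fun h => hy ⟨h, hyA2⟩
        obtain ⟨x', hx', h2⟩ := hU2.2
        exact notReach x' hx' y hyS h2
    exact hyU ((walk_inv hinv hr).mp hxU)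
  -- conclude
  refine ⟨A, B, hAnonempty, hAuniv, hBnonempty, hBuniv, hABu, ?_⟩
  intro FA FB hFA hFB
  have hδsub : (δC : Set (Sym2 W)) ⊆ H.edgeSet := fun e he =>
    hF.1 (Finset.mem_coe.mpr (Finset.filter_subset _ _ (Finset.mem_coe.mp he)))
  have hE'sub : (E' : Set (Sym2 W)) ⊆ H.edgeSet := fun e he =>
    hF.1 (Finset.mem_coe.mpr (Finset.filter_subset _ _ (Finset.mem_coe.mp he)))
  have h1 : cutWeight c FA ≤ cutWeight c δC := hFA.2.2 δC hδsub sepA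
  have h2 : cutWeight c FB ≤ cutWeight c E' := hFB.2.2 E' hE'sub sepB
  have h3 : Separates H ((FA ∪ FB : Finset (Sym2 W)) : Set (Sym2 W)) (t '' S)
      (Set.range t \ t '' S) := union_sep (c := c) t (Or.inl hABu) hFA.2.1 hFB.2.1
  have h4 : cutWeight c F ≤ cutWeight c (FA ∪ FB) := by
    refine hF.2.2 _ ?_ h3
    intro e he
    rcases Finset.mem_union.mp (Finset.mem_coe.mp he) with h | h
    · exact hFA.1 (Finset.mem_coe.mpr h)
    · exact hFB.1 (Finset.mem_coe.mpr h)
  have h5 : cutWeight c (FA ∪ FB) ≤ cutWeight c FA + cutWeight c FB :=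
    cutWeight_union_le (fun e he => le_of_lt (hpos e (hFA.1 (Finset.mem_coe.mpr he))))
  linarith

lemma main_split [Finite W] {c : Sym2 W → ℝ} (hconn : H.Connected)
    (hpos : ∀ e ∈ H.edgeSet, 0 < c e) (t : τ ↪ W) {S : Set τ}
    (hS : S.Nonempty) (hS' : S ≠ Set.univ) {F : Finset (Sym2 W)}
    (hF : IsMinCutset H c (Set.range t) (t '' S) F)
    (hk : numComponents (H.deleteEdges (F : Set (Sym2 W))) ≠ 2) :
    ∃ A B : Set τ, A.Nonempty ∧ A ≠ Set.univ ∧ B.Nonempty ∧ B ≠ Set.univ ∧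
      (A ∪ B = S ∨ A ∪ B = Sᶜ) ∧
      ∀ FA FB : Finset (Sym2 W),
        IsMinCutset H c (Set.range t) (t '' A) FA →
        IsMinCutset H c (Set.range t) (t '' B) FB →
        cutWeight c FA + cutWeight c FB = cutWeight c F := by
  obtain ⟨x₀, hcase⟩ := exists_strict_component hconn hpos t hS hS' hF hk
  rcases hcase with ⟨hx₀, hAne⟩ | ⟨hx₀, hAne⟩
  · obtain ⟨A, B, h1, h2, h3, h4, h5, h6⟩ := split_aux hpos t hS' hF x₀ hx₀ hAne
    exact ⟨A, B, h1, h2, h3, h4, Or.inl h5, h6⟩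
  · have hSc : (Sᶜ : Set τ) ≠ Set.univ := by
      intro h
      obtain ⟨x, hx⟩ := hS
      exact (h ▸ Set.mem_univ x : x ∈ Sᶜ) hx
    obtain ⟨A, B, h1, h2, h3, h4, h5, h6⟩ :=
      split_aux hpos t hSc (minCutset_compl t hF) x₀ hx₀ hAne
    exact ⟨A, B, h1, h2, h3, h4, Or.inr h5, h6⟩

/-- if `G` and `H` have the same elementary terminal subsets and `H`
preserves all elementary minimum terminal cuts up to factor `q`, then `H` preserves
all minimum terminal cuts up to factor `q` (i.e. `H` is a quality-`q` cut sparsifier).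

The common terminal set is modelled by a type `τ` embedded in both vertex sets;
`EG S`/`EH S` are the (unique) minimum cutsets separating `S` from its complement. -/
theorem elementary_cuts_suffice_for_cut_sparsifier
    {V W τ : Type} [Fintype V] [Fintype W] [Fintype τ]
    (G : SimpleGraph V) (H : SimpleGraph W) (cG : Sym2 V → ℝ) (cH : Sym2 W → ℝ)
    (hGconn : G.Connected) (hHconn : H.Connected)
    (hGpos : ∀ e ∈ G.edgeSet, 0 < cG e) (hHpos : ∀ e ∈ H.edgeSet, 0 < cH e)
    (tG : τ ↪ V) (tH : τ ↪ W)
    (EG : Set τ → Finset (Sym2 V)) (EH : Set τ → Finset (Sym2 W))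
    (hEG : ∀ S : Set τ, S.Nonempty → S ≠ Set.univ →
      IsMinCutset G cG (Set.range tG) (tG '' S) (EG S))
    (hEH : ∀ S : Set τ, S.Nonempty → S ≠ Set.univ →
      IsMinCutset H cH (Set.range tH) (tH '' S) (EH S))
    (q : ℝ) (hq : 1 ≤ q)
    -- the families of elementary terminal subsets coincide: T_e(G) = T_e(H)
    (hTe : ∀ S : Set τ, S.Nonempty → S ≠ Set.univ →
      (numComponents (G.deleteEdges ((EG S : Set (Sym2 V)))) = 2 ↔
       numComponents (H.deleteEdges ((EH S : Set (Sym2 W)))) = 2))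
    -- every elementary minimum terminal cut is preserved up to factor q
    (happrox : ∀ S : Set τ, S.Nonempty → S ≠ Set.univ →
      numComponents (G.deleteEdges ((EG S : Set (Sym2 V)))) = 2 →
      cutWeight cG (EG S) ≤ cutWeight cH (EH S) ∧
      cutWeight cH (EH S) ≤ q * cutWeight cG (EG S)) :
    ∀ S : Set τ, S.Nonempty → S ≠ Set.univ →
      cutWeight cG (EG S) ≤ cutWeight cH (EH S) ∧
      cutWeight cH (EH S) ≤ q * cutWeight cG (EG S) := by
  classical
  have key_lower : ∀ n : ℕ, ∀ S : Set τ, S.Nonempty → S ≠ Set.univ →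
      (Finset.univ.filter (fun S' : Set τ =>
        cutWeight cH (EH S') < cutWeight cH (EH S))).card < n →
      cutWeight cG (EG S) ≤ cutWeight cH (EH S) := by
    intro n
    induction n using Nat.strong_induction_on with
    | _ n ih =>
      intro S hS hS' hμ
      by_cases h2 : numComponents (H.deleteEdges ((EH S : Set (Sym2 W)))) = 2
      · exact (happrox S hS hS' ((hTe S hS hS').mpr h2)).1
      · obtain ⟨A, B, hA, hA', hB, hB', hAB, hkey⟩ :=
          main_split hHconn hHpos tH hS hS' (hEH S hS hS') h2
        have hId : cutWeight cH (EH A) + cutWeight cH (EH B) = cutWeight cH (EH S) :=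
          hkey _ _ (hEH A hA hA') (hEH B hB hB')
        have hposA := minCut_pos hHconn hHpos tH hA hA' (hEH A hA hA')
        have hposB := minCut_pos hHconn hHpos tH hB hB' (hEH B hB hB')
        have hltA : cutWeight cH (EH A) < cutWeight cH (EH S) := by linarith
        have hltB : cutWeight cH (EH B) < cutWeight cH (EH S) := by linarith
        have hμmono : ∀ X : Set τ, cutWeight cH (EH X) < cutWeight cH (EH S) →
            (Finset.univ.filter (fun S' : Set τ =>
              cutWeight cH (EH S') < cutWeight cH (EH X))).card <
            (Finset.univ.filter (fun S' : Set τ =>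
              cutWeight cH (EH S') < cutWeight cH (EH S))).card := by
          intro X hX
          apply Finset.card_lt_card
          constructor
          · intro S' hS'2
            simp only [Finset.mem_filter, Finset.mem_univ, true_and] at hS'2 ⊢
            linarith
          · intro hcon
            have : X ∈ Finset.univ.filter (fun S' : Set τ =>
                cutWeight cH (EH S') < cutWeight cH (EH X)) := by
              apply hcon
              simp only [Finset.mem_filter, Finset.mem_univ, true_and]
              exact hX
            simp only [Finset.mem_filter, Finset.mem_univ, true_and] at this
            exact lt_irrefl _ this
        have ihA := ih _ hμ A hA hA' (hμmono A hltA)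
        have ihB := ih _ hμ B hB hB' (hμmono B hltB)
        have hsub : cutWeight cG (EG S) ≤ cutWeight cG (EG A) + cutWeight cG (EG B) := by
          have h3 := union_sep (c := cG) tG hAB (hEG A hA hA').2.1 (hEG B hB hB').2.1
          have h4 : cutWeight cG (EG S) ≤ cutWeight cG (EG A ∪ EG B) := by
            refine (hEG S hS hS').2.2 _ ?_ h3
            intro e he
            rcases Finset.mem_union.mp (Finset.mem_coe.mp he) with h | h
            · exact (hEG A hA hA').1 (Finset.mem_coe.mpr h)
            · exact (hEG B hB hB').1 (Finset.mem_coe.mpr h)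
          have h5 : cutWeight cG (EG A ∪ EG B) ≤ cutWeight cG (EG A) + cutWeight cG (EG B) :=
            cutWeight_union_le (fun e he =>
              le_of_lt (hGpos e ((hEG A hA hA').1 (Finset.mem_coe.mpr he))))
          linarith
        linarith
  have key_upper : ∀ n : ℕ, ∀ S : Set τ, S.Nonempty → S ≠ Set.univ →
      (Finset.univ.filter (fun S' : Set τ =>
        cutWeight cG (EG S') < cutWeight cG (EG S))).card < n →
      cutWeight cH (EH S) ≤ q * cutWeight cG (EG S) := by
    intro n
    induction n using Nat.strong_induction_on with
    | _ n ih =>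
      intro S hS hS' hμ
      by_cases h2 : numComponents (G.deleteEdges ((EG S : Set (Sym2 V)))) = 2
      · exact (happrox S hS hS' h2).2
      · obtain ⟨A, B, hA, hA', hB, hB', hAB, hkey⟩ :=
          main_split hGconn hGpos tG hS hS' (hEG S hS hS') h2
        have hId : cutWeight cG (EG A) + cutWeight cG (EG B) = cutWeight cG (EG S) :=
          hkey _ _ (hEG A hA hA') (hEG B hB hB')
        have hposA := minCut_pos hGconn hGpos tG hA hA' (hEG A hA hA')
        have hposB := minCut_pos hGconn hGpos tG hB hB' (hEG B hB hB')
        have hltA : cutWeight cG (EG A) < cutWeight cG (EG S) := by linarith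
        have hltB : cutWeight cG (EG B) < cutWeight cG (EG S) := by linarith
        have hμmono : ∀ X : Set τ, cutWeight cG (EG X) < cutWeight cG (EG S) →
            (Finset.univ.filter (fun S' : Set τ =>
              cutWeight cG (EG S') < cutWeight cG (EG X))).card <
            (Finset.univ.filter (fun S' : Set τ =>
              cutWeight cG (EG S') < cutWeight cG (EG S))).card := by
          intro X hX
          apply Finset.card_lt_card
          constructor
          · intro S' hS'2
            simp only [Finset.mem_filter, Finset.mem_univ, true_and] at hS'2 ⊢
            linarith
          · intro hcon
            have : X ∈ Finset.univ.filter (fun S' : Set τ =>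
                cutWeight cG (EG S') < cutWeight cG (EG X)) := by
              apply hcon
              simp only [Finset.mem_filter, Finset.mem_univ, true_and]
              exact hX
            simp only [Finset.mem_filter, Finset.mem_univ, true_and] at this
            exact lt_irrefl _ this
        have ihA := ih _ hμ A hA hA' (hμmono A hltA)
        have ihB := ih _ hμ B hB hB' (hμmono B hltB)
        have hsub : cutWeight cH (EH S) ≤ cutWeight cH (EH A) + cutWeight cH (EH B) := by
          have h3 := union_sep (c := cH) tH hAB (hEH A hA hA').2.1 (hEH B hB hB').2.1
          have h4 : cutWeight cH (EH S) ≤ cutWeight cH (EH A ∪ EH B) := by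
            refine (hEH S hS hS').2.2 _ ?_ h3
            intro e he
            rcases Finset.mem_union.mp (Finset.mem_coe.mp he) with h | h
            · exact (hEH A hA hA').1 (Finset.mem_coe.mpr h)
            · exact (hEH B hB hB').1 (Finset.mem_coe.mpr h)
          have h5 : cutWeight cH (EH A ∪ EH B) ≤ cutWeight cH (EH A) + cutWeight cH (EH B) :=
            cutWeight_union_le (fun e he =>
              le_of_lt (hHpos e ((hEH A hA hA').1 (Finset.mem_coe.mpr he))))
          linarith
        nlinarith [ihA, ihB, hId, hsub]
  intro S hS hS'
  exact ⟨key_lower _ S hS hS' (Nat.lt_succ_self _),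
    key_upper _ S hS hS' (Nat.lt_succ_self _)⟩
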